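/- Let p < 0 and 0 < q < 1. Then for every integer t ≥ 0, the weighted sum ∑_{i=0}^{t} exp(p·∑_{k=i+1}^{t}(1+k)^{-q})·(1+i)^{-2q} is bounded above by (2e^{|p|/2}/|p|)·[D_p·exp((p/2)·∑_{k=0}^{t}(1+k)^{-q}) + (1+t)^{-q}], where D_p = exp((|p|/2)·∑_{k=0}^{i_p}(1+k)^{-q}) and i_p is any integer larger than (|p|/(2q))^{1/(1-q)}. -/

import Mathlib

open Finset Real

noncomputable def auxB (q : ℝ) (k : ℕ) : ℝ := (1 + (k : ℝ)) ^ (-q)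
noncomputable def auxS (q : ℝ) (n : ℕ) : ℝ := ∑ k ∈ Finset.range (n + 1), auxB q k
noncomputable def auxH (q c : ℝ) (i : ℕ) : ℝ := auxB q i * Real.exp (c * auxS q i)
def auxCond (q c : ℝ) (j : ℕ) : Prop := q * (2 + (j : ℝ)) ^ q ≤ c * (1 + (j : ℝ))

lemma one_add_cast_pos (k : ℕ) : (0:ℝ) < 1 + (k:ℝ) := by positivity

lemma auxB_pos (q : ℝ) (k : ℕ) : 0 < auxB q k :=
  Real.rpow_pos_of_pos (one_add_cast_pos k) _

lemma auxB_le_one (q : ℝ) (hq : 0 ≤ q) (k : ℕ) : auxB q k ≤ 1 := by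
  apply Real.rpow_le_one_of_one_le_of_nonpos
  · have : (0:ℝ) ≤ (k:ℝ) := Nat.cast_nonneg k
    linarith
  · linarith

lemma auxB_succ (q : ℝ) (j : ℕ) : auxB q (j+1) = (2 + (j:ℝ)) ^ (-q) := by
  have h : (1 + ((j+1:ℕ):ℝ)) = 2 + (j:ℝ) := by push_cast; ring
  unfold auxB
  rw [h]

lemma auxS_mono (q : ℝ) {m n : ℕ} (h : m ≤ n) : auxS q m ≤ auxS q n := by
  apply Finset.sum_le_sum_of_subset_of_nonneg
  · exact Finset.range_subset_range.2 (by omega)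
  · intro k _ _
    exact (auxB_pos q k).le

lemma auxS_succ (q : ℝ) (n : ℕ) : auxS q (n+1) = auxS q n + auxB q (n+1) :=
  Finset.sum_range_succ _ _

/-- The monotonicity condition is upward closed. -/
lemma auxCond_succ (q c : ℝ) (hq0 : 0 < q) (hq1 : q < 1) (hc : 0 < c) (j : ℕ)
    (h : auxCond q c j) : auxCond q c (j + 1) := by
  unfold auxCond at h ⊢
  have hj : (0:ℝ) ≤ (j:ℝ) := Nat.cast_nonneg j
  push_cast
  have h2 : (0:ℝ) < 2 + (j:ℝ) := by linarith
  have h1 : (0:ℝ) < 1 + (j:ℝ) := by linarith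
  have h3 : (0:ℝ) < 3 + (j:ℝ) := by linarith
  have hdiv : (1:ℝ) ≤ (3 + (j:ℝ)) / (2 + j) := by
    rw [le_div_iff₀ h2]; linarith
  have hxq : ((3 + (j:ℝ)) / (2 + j)) ^ q ≤ (3 + (j:ℝ)) / (2 + j) := by
    calc ((3 + (j:ℝ)) / (2 + j)) ^ q ≤ ((3 + (j:ℝ)) / (2 + j)) ^ (1:ℝ) :=
          Real.rpow_le_rpow_of_exponent_le hdiv hq1.le
      _ = (3 + (j:ℝ)) / (2 + j) := Real.rpow_one _
  have hsplit : ((3:ℝ) + j) ^ q = (2 + (j:ℝ)) ^ q * ((3 + (j:ℝ)) / (2 + j)) ^ q := by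
    rw [← Real.mul_rpow h2.le (by positivity)]
    congr 1
    field_simp
  have hkey : ((3:ℝ) + j) ^ q ≤ (2 + (j:ℝ)) ^ q * ((3 + (j:ℝ)) / (2 + j)) := by
    rw [hsplit]
    exact mul_le_mul_of_nonneg_left hxq (Real.rpow_nonneg h2.le q)
  have hq2 : q * ((3:ℝ) + j) ^ q ≤ c * (1 + j) * ((3 + (j:ℝ)) / (2 + j)) := by
    calc q * ((3:ℝ) + j) ^ q ≤ q * ((2 + (j:ℝ)) ^ q * ((3 + (j:ℝ)) / (2 + j))) :=
          mul_le_mul_of_nonneg_left hkey hq0.le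
      _ = (q * (2 + (j:ℝ)) ^ q) * ((3 + (j:ℝ)) / (2 + j)) := by ring
      _ ≤ (c * (1 + (j:ℝ))) * ((3 + (j:ℝ)) / (2 + j)) := by
          apply mul_le_mul_of_nonneg_right h
          positivity
  have hfin : c * (1 + (j:ℝ)) * ((3 + (j:ℝ)) / (2 + j)) ≤ c * (2 + j) := by
    have heq : c * (1 + (j:ℝ)) * ((3 + (j:ℝ)) / (2 + j)) = (c * (1 + (j:ℝ)) * (3 + (j:ℝ))) / (2 + j) := by
      ring
    rw [heq, div_le_iff₀ h2]
    nlinarith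
  calc q * (2 + ((j:ℝ) + 1)) ^ q = q * ((3:ℝ) + j) ^ q := by ring_nf
    _ ≤ c * (2 + (j:ℝ)) := hq2.trans hfin
    _ = c * (1 + ((j:ℝ) + 1)) := by ring

lemma auxCond_mono (q c : ℝ) (hq0 : 0 < q) (hq1 : q < 1) (hc : 0 < c) {i j : ℕ}
    (hij : i ≤ j) (h : auxCond q c i) : auxCond q c j := by
  induction j, hij using Nat.le_induction with
  | base => exact h
  | succ n hn ih => exact auxCond_succ q c hq0 hq1 hc n ih

/-- One-step monotonicity of `auxH` under the condition. -/
lemma auxH_step (q c : ℝ) (hq0 : 0 < q) (hq1 : q < 1) (hc : 0 < c) (j : ℕ)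
    (h : auxCond q c j) : auxH q c j ≤ auxH q c (j + 1) := by
  unfold auxCond at h
  have h1 : (0:ℝ) < 1 + (j:ℝ) := one_add_cast_pos j
  have h2 : (0:ℝ) < 2 + (j:ℝ) := by linarith
  have hBpos : (0:ℝ) < (2 + (j:ℝ)) ^ q := Real.rpow_pos_of_pos h2 q
  have h1q : (0:ℝ) < (1 + (j:ℝ)) ^ q := Real.rpow_pos_of_pos h1 q
  have key : auxB q j ≤ auxB q (j + 1) * Real.exp (c * auxB q (j + 1)) := by
    rw [auxB_succ]
    show (1 + (j:ℝ)) ^ (-q) ≤ _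
    have e1 : (1 + (j:ℝ)) ^ (-q) = (2 + (j:ℝ)) ^ (-q) * ((2 + (j:ℝ)) / (1 + j)) ^ q := by
      rw [Real.div_rpow h2.le h1.le, Real.rpow_neg h2.le, Real.rpow_neg h1.le]
      field_simp
    have hlog : Real.log ((2 + (j:ℝ)) / (1 + j)) ≤ 1 / (1 + (j:ℝ)) := by
      have hh := Real.log_le_sub_one_of_pos (x := (2 + (j:ℝ)) / (1 + j)) (by positivity)
      have heq : (2 + (j:ℝ)) / (1 + j) - 1 = 1 / (1 + (j:ℝ)) := by
        field_simp
        norm_num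
      linarith [heq ▸ hh]
    have hstep : q * (1 / (1 + (j:ℝ))) ≤ c * (2 + (j:ℝ)) ^ (-q) := by
      rw [Real.rpow_neg h2.le, mul_one_div, ← div_eq_mul_inv, div_le_div_iff₀ h1 hBpos]
      linarith [h]
    have e2 : ((2 + (j:ℝ)) / (1 + j)) ^ q ≤ Real.exp (c * (2 + (j:ℝ)) ^ (-q)) := by
      rw [Real.rpow_def_of_pos (by positivity : (0:ℝ) < (2 + (j:ℝ)) / (1 + j))]
      apply Real.exp_le_exp.2
      calc Real.log ((2 + (j:ℝ)) / (1 + j)) * q ≤ (1 / (1 + (j:ℝ))) * q := by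
            apply mul_le_mul_of_nonneg_right hlog hq0.le
        _ = q * (1 / (1 + (j:ℝ))) := by ring
        _ ≤ c * (2 + (j:ℝ)) ^ (-q) := hstep
    calc (1 + (j:ℝ)) ^ (-q) = (2 + (j:ℝ)) ^ (-q) * ((2 + (j:ℝ)) / (1 + j)) ^ q := e1
      _ ≤ (2 + (j:ℝ)) ^ (-q) * Real.exp (c * (2 + (j:ℝ)) ^ (-q)) :=
          mul_le_mul_of_nonneg_left e2 (Real.rpow_nonneg h2.le _)
  unfold auxH
  rw [auxS_succ, mul_add, Real.exp_add]
  calc auxB q j * Real.exp (c * auxS q j)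
      ≤ (auxB q (j+1) * Real.exp (c * auxB q (j+1))) * Real.exp (c * auxS q j) :=
        mul_le_mul_of_nonneg_right key (Real.exp_pos _).le
    _ = auxB q (j+1) * (Real.exp (c * auxS q j) * Real.exp (c * auxB q (j+1))) := by ring

lemma auxH_chain (q c : ℝ) (hq0 : 0 < q) (hq1 : q < 1) (hc : 0 < c) {i t : ℕ}
    (hcnd : auxCond q c i) (hit : i ≤ t) : auxH q c i ≤ auxH q c t := by
  induction t, hit using Nat.le_induction with
  | base => exact le_refl _
  | succ n hn ih =>
      exact ih.trans (auxH_step q c hq0 hq1 hc n (auxCond_mono q c hq0 hq1 hc hn hcnd))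

/-- When the condition fails, `auxH i` is below the constant `exp (c * auxS q ip)`. -/
lemma auxH_le_A (q c : ℝ) (hq0 : 0 < q) (hq1 : q < 1) (hc : 0 < c) (ip i : ℕ)
    (hip : 1 ≤ ip) (hnc : ¬ auxCond q c i) : auxH q c i ≤ Real.exp (c * auxS q ip) := by
  rcases le_or_gt i ip with hle | hgt
  · calc auxH q c i ≤ 1 * Real.exp (c * auxS q i) :=
          mul_le_mul_of_nonneg_right (auxB_le_one q hq0.le i) (Real.exp_pos _).le
      _ = Real.exp (c * auxS q i) := one_mul _
      _ ≤ Real.exp (c * auxS q ip) := by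
          apply Real.exp_le_exp.2
          exact mul_le_mul_of_nonneg_left (auxS_mono q hle) hc.le
  · -- hard case : ip < i and ¬cond i
    have h1 : (0:ℝ) < 1 + (i:ℝ) := one_add_cast_pos i
    have h2 : (0:ℝ) < 2 + (i:ℝ) := by linarith
    have hipi : (1:ℝ) + (ip:ℝ) ≤ 1 + (i:ℝ) := by
      have : (ip:ℝ) ≤ (i:ℝ) := Nat.cast_le.2 hgt.le
      linarith
    set L := Real.log (1 + (i:ℝ)) with hLdef
    set M := Real.log (1 + (ip:ℝ)) with hMdef
    have hLM : M ≤ L := Real.log_le_log (one_add_cast_pos ip) hipi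
    have hM2 : Real.log 2 ≤ M := by
      apply Real.log_le_log (by norm_num)
      have : (1:ℝ) ≤ (ip:ℝ) := by exact_mod_cast hip
      linarith
    have hLpos : 0 ≤ L := by
      rw [hLdef]
      apply Real.log_nonneg
      linarith [Nat.cast_nonneg (α := ℝ) i]
    -- L ≤ (1+i) log 2
    have hL2 : L ≤ (1 + (i:ℝ)) * Real.log 2 := by
      have hn : (1 + (i:ℝ)) ≤ (2:ℝ) ^ (i+1) := by
        have := Nat.lt_two_pow_self (n := i+1)
        have h' : ((i+1 : ℕ):ℝ) ≤ ((2^(i+1) : ℕ):ℝ) := Nat.cast_le.2 this.le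
        push_cast at h'
        linarith
      calc L ≤ Real.log ((2:ℝ) ^ (i+1)) := Real.log_le_log h1 hn
        _ = ((i:ℝ)+1) * Real.log 2 := by rw [Real.log_pow]; push_cast; ring
        _ = (1 + (i:ℝ)) * Real.log 2 := by ring
    -- the sum gap bound
    have hgap : auxS q i - auxS q ip ≤ (1 + (i:ℝ)) ^ (1-q) * (L - M) := by
      have hsub : auxS q i - auxS q ip = ∑ k ∈ Finset.Ico (ip+1) (i+1), auxB q k := by
        rw [Finset.sum_Ico_eq_sub _ (by omega : ip + 1 ≤ i + 1)]
        rfl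
      have hterm : ∀ k ∈ Finset.Ico (ip+1) (i+1),
          auxB q k ≤ (1 + (i:ℝ)) ^ (1-q) * (Real.log ((k:ℝ)+1) - Real.log (k:ℝ)) := by
        intro k hk
        simp only [Finset.mem_Ico] at hk
        have hk1 : 1 ≤ k := by omega
        have hkpos : (0:ℝ) < (k:ℝ) := by exact_mod_cast hk1
        have hk1pos : (0:ℝ) < 1 + (k:ℝ) := one_add_cast_pos k
        have hki : (1:ℝ) + (k:ℝ) ≤ 1 + (i:ℝ) := by
          have : (k:ℝ) ≤ (i:ℝ) := Nat.cast_le.2 (by omega)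
          linarith
        -- 1/(1+k) ≤ log(k+1) - log k
        have hlogk : 1 / (1 + (k:ℝ)) ≤ Real.log ((k:ℝ)+1) - Real.log (k:ℝ) := by
          have hh := Real.log_le_sub_one_of_pos (x := (k:ℝ) / ((k:ℝ)+1)) (by positivity)
          have heq : Real.log ((k:ℝ) / ((k:ℝ)+1)) = Real.log (k:ℝ) - Real.log ((k:ℝ)+1) :=
            Real.log_div (ne_of_gt hkpos) (by positivity)
          have heq2 : (k:ℝ) / ((k:ℝ)+1) - 1 = -(1 / ((k:ℝ)+1)) := by field_simp; ring
          rw [heq, heq2] at hh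
          have : (1:ℝ) + (k:ℝ) = (k:ℝ) + 1 := by ring
          rw [this]
          linarith
        -- auxB q k = (1+k)^(1-q) / (1+k)
        have hBk : auxB q k = (1 + (k:ℝ)) ^ (1-q) * (1 / (1 + (k:ℝ))) := by
          unfold auxB
          rw [one_div, show ((1+(k:ℝ)))⁻¹ = (1+(k:ℝ))^(-1:ℝ) by
            rw [Real.rpow_neg hk1pos.le, Real.rpow_one], ← Real.rpow_add hk1pos]
          congr 1
          ring
        rw [hBk]
        apply mul_le_mul
        · exact Real.rpow_le_rpow hk1pos.le hki (by linarith)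
        · exact hlogk
        · positivity
        · positivity
      calc auxS q i - auxS q ip = ∑ k ∈ Finset.Ico (ip+1) (i+1), auxB q k := hsub
        _ ≤ ∑ k ∈ Finset.Ico (ip+1) (i+1),
              (1 + (i:ℝ)) ^ (1-q) * (Real.log ((k:ℝ)+1) - Real.log (k:ℝ)) :=
            Finset.sum_le_sum hterm
        _ = (1 + (i:ℝ)) ^ (1-q) *
              ∑ k ∈ Finset.Ico (ip+1) (i+1), (Real.log ((k:ℝ)+1) - Real.log (k:ℝ)) := by
            rw [Finset.mul_sum]
        _ = (1 + (i:ℝ)) ^ (1-q) * (L - M) := by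
            congr 1
            rw [Finset.sum_Ico_eq_sub _ (by omega : ip + 1 ≤ i + 1)]
            have tele : ∀ n : ℕ, ∑ k ∈ Finset.range n, (Real.log ((k:ℝ)+1) - Real.log (k:ℝ))
                = Real.log (n:ℝ) := by
              intro n
              have := Finset.sum_range_sub (f := fun k : ℕ => Real.log (k:ℝ)) n
              calc ∑ k ∈ Finset.range n, (Real.log ((k:ℝ)+1) - Real.log (k:ℝ))
                  = ∑ k ∈ Finset.range n,
                      ((fun k : ℕ => Real.log (k:ℝ)) (k+1) - (fun k : ℕ => Real.log (k:ℝ)) k) := by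
                    apply Finset.sum_congr rfl
                    intro k _
                    push_cast
                    ring_nf
                _ = Real.log (n:ℝ) - Real.log ((0:ℕ):ℝ) :=
                    Finset.sum_range_sub (f := fun k : ℕ => Real.log (k:ℝ)) n
                _ = Real.log (n:ℝ) := by simp
            rw [tele, tele]
            rw [hLdef, hMdef]
            push_cast
            ring_nf
    -- numeric conclusion
    unfold auxCond at hnc
    push_neg at hnc
    have hnc' : c * (1 + (i:ℝ)) ≤ q * (2 + (i:ℝ)) ^ q := hnc.le
    have hPq : (0:ℝ) < (1 + (i:ℝ)) ^ q := Real.rpow_pos_of_pos h1 q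
    have hQq : (0:ℝ) < (2 + (i:ℝ)) ^ q := Real.rpow_pos_of_pos h2 q
    have hRq : (0:ℝ) < (1 + (i:ℝ)) ^ (1-q) := Real.rpow_pos_of_pos h1 _
    have hRP : (1 + (i:ℝ)) ^ (1-q) * (1 + (i:ℝ)) ^ q = 1 + (i:ℝ) := by
      rw [← Real.rpow_add h1]
      norm_num
    -- star : (2+i)^q * (1+i) ≤ (2+i) * (1+i)^q
    have hstar : (2 + (i:ℝ)) ^ q * (1 + (i:ℝ)) ≤ (2 + (i:ℝ)) * (1 + (i:ℝ)) ^ q := by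
      have hdiv : (1:ℝ) ≤ (2 + (i:ℝ)) / (1 + (i:ℝ)) := by
        rw [le_div_iff₀ h1]; linarith
      have hxq : ((2 + (i:ℝ)) / (1 + (i:ℝ))) ^ q ≤ (2 + (i:ℝ)) / (1 + (i:ℝ)) := by
        calc ((2 + (i:ℝ)) / (1 + (i:ℝ))) ^ q ≤ ((2 + (i:ℝ)) / (1 + (i:ℝ))) ^ (1:ℝ) :=
              Real.rpow_le_rpow_of_exponent_le hdiv hq1.le
          _ = _ := Real.rpow_one _
      rw [Real.div_rpow h2.le h1.le] at hxq
      rw [div_le_div_iff₀ hPq h1] at hxq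
      linarith
    -- goal in log form
    have hgoal : c * (auxS q i - auxS q ip) ≤ q * L := by
      have s1 : c * (auxS q i - auxS q ip) ≤ c * ((1 + (i:ℝ)) ^ (1-q) * (L - M)) :=
        mul_le_mul_of_nonneg_left hgap hc.le
      -- multiply chain by (1+i)^q
      have s2 : c * ((1 + (i:ℝ)) ^ (1-q) * (L - M)) * (1 + (i:ℝ)) ^ q
          = c * (1 + (i:ℝ)) * (L - M) := by
        calc c * ((1 + (i:ℝ)) ^ (1-q) * (L - M)) * (1 + (i:ℝ)) ^ q
            = c * ((1 + (i:ℝ)) ^ (1-q) * (1 + (i:ℝ)) ^ q) * (L - M) := by ring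
          _ = c * (1 + (i:ℝ)) * (L - M) := by rw [hRP]
      have s3 : c * (1 + (i:ℝ)) * (L - M) ≤ q * (2 + (i:ℝ)) ^ q * (L - M) :=
        mul_le_mul_of_nonneg_right (by nlinarith) (by linarith)
      have hL2M : L ≤ (2 + (i:ℝ)) * M := by
        calc L ≤ (1 + (i:ℝ)) * Real.log 2 := hL2
          _ ≤ (2 + (i:ℝ)) * Real.log 2 := by
              apply mul_le_mul_of_nonneg_right (by linarith) (Real.log_nonneg (by norm_num))
          _ ≤ (2 + (i:ℝ)) * M := mul_le_mul_of_nonneg_left hM2 (by linarith)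
      have hqLM : 0 ≤ q * (L - M) := mul_nonneg hq0.le (by linarith)
      have base : (2 + (i:ℝ)) * (L - M) ≤ (1 + (i:ℝ)) * L := by nlinarith [hL2M, hLM]
      have e2' : (q * (L - M)) * ((2 + (i:ℝ)) ^ q * (1 + (i:ℝ)))
          ≤ (q * (L - M)) * ((2 + (i:ℝ)) * (1 + (i:ℝ)) ^ q) :=
        mul_le_mul_of_nonneg_left hstar hqLM
      have e3 : (q * (L - M)) * ((2 + (i:ℝ)) * (1 + (i:ℝ)) ^ q)
          ≤ q * L * ((1 + (i:ℝ)) ^ q * (1 + (i:ℝ))) := by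
        have h' := mul_le_mul_of_nonneg_left base (mul_nonneg hq0.le hPq.le)
        calc (q * (L - M)) * ((2 + (i:ℝ)) * (1 + (i:ℝ)) ^ q)
            = (q * (1 + (i:ℝ)) ^ q) * ((2 + (i:ℝ)) * (L - M)) := by ring
          _ ≤ (q * (1 + (i:ℝ)) ^ q) * ((1 + (i:ℝ)) * L) := h'
          _ = q * L * ((1 + (i:ℝ)) ^ q * (1 + (i:ℝ))) := by ring
      have final : c * (auxS q i - auxS q ip) * (1 + (i:ℝ)) ^ q ≤ q * L * (1 + (i:ℝ)) ^ q := by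
        calc c * (auxS q i - auxS q ip) * (1 + (i:ℝ)) ^ q
            ≤ c * ((1 + (i:ℝ)) ^ (1-q) * (L - M)) * (1 + (i:ℝ)) ^ q :=
              mul_le_mul_of_nonneg_right s1 hPq.le
          _ = c * (1 + (i:ℝ)) * (L - M) := s2
          _ ≤ q * (2 + (i:ℝ)) ^ q * (L - M) := s3
          _ ≤ q * L * (1 + (i:ℝ)) ^ q := by
              apply le_of_mul_le_mul_right _ h1
              calc q * (2 + (i:ℝ)) ^ q * (L - M) * (1 + (i:ℝ))
                  = (q * (L - M)) * ((2 + (i:ℝ)) ^ q * (1 + (i:ℝ))) := by ring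
                _ ≤ (q * (L - M)) * ((2 + (i:ℝ)) * (1 + (i:ℝ)) ^ q) := e2'
                _ ≤ q * L * ((1 + (i:ℝ)) ^ q * (1 + (i:ℝ))) := e3
                _ = q * L * (1 + (i:ℝ)) ^ q * (1 + (i:ℝ)) := by ring
      exact le_of_mul_le_mul_right final hPq

    -- convert to exp form
    unfold auxH
    have hBi : auxB q i = Real.exp (-(q * L)) := by
      unfold auxB
      rw [Real.rpow_def_of_pos h1]
      congr 1
      rw [hLdef]
      ring
    rw [hBi, ← Real.exp_add]
    apply Real.exp_le_exp.2
    linarith [hgoal]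

/-- Key lemma: `auxH i ≤ exp (c * auxS q ip) + auxH t` for `i ≤ t`. -/
lemma auxKey (q c : ℝ) (hq0 : 0 < q) (hq1 : q < 1) (hc : 0 < c) (ip : ℕ) (hip : 1 ≤ ip)
    {i t : ℕ} (hit : i ≤ t) :
    auxH q c i ≤ Real.exp (c * auxS q ip) + auxH q c t := by
  by_cases hcnd : auxCond q c i
  · have := auxH_chain q c hq0 hq1 hc hcnd hit
    have hApos : 0 < Real.exp (c * auxS q ip) := Real.exp_pos _
    linarith
  · have := auxH_le_A q c hq0 hq1 hc ip i hip hcnd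
    have hHpos : 0 < auxH q c t := mul_pos (auxB_pos q t) (Real.exp_pos _)
    linarith

/-- Variance-sum bound: for `p < 0`, `0 < q < 1`, and any integer `t ≥ 0`,
`∑_{i=0}^{t} exp(p·∑_{k=i+1}^{t}(1+k)^{-q})·(1+i)^{-2q}`
is at most `(2e^{|p|/2}/|p|)·[D_p·exp((p/2)·∑_{k=0}^{t}(1+k)^{-q}) + (1+t)^{-q}]`,
where `D_p = exp((|p|/2)·∑_{k=0}^{i_p}(1+k)^{-q})` and `i_p > (|p|/(2q))^{1/(1-q)}`. -/
theorem stmt_0 (p q : ℝ) (hp : p < 0) (hq0 : 0 < q) (hq1 : q < 1)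
    (t : ℕ) (ip : ℕ) (hip : ((|p| / (2 * q)) ^ ((1 : ℝ) / (1 - q)) : ℝ) < ip) :
    ∑ i ∈ Finset.range (t + 1),
        Real.exp (p * ∑ k ∈ Finset.Icc (i + 1) t, (1 + (k : ℝ)) ^ (-q)) *
          (1 + (i : ℝ)) ^ (-(2 * q))
      ≤ (2 * Real.exp (|p| / 2) / |p|) *
        (Real.exp ((|p| / 2) * ∑ k ∈ Finset.range (ip + 1), (1 + (k : ℝ)) ^ (-q)) *
            Real.exp ((p / 2) * ∑ k ∈ Finset.range (t + 1), (1 + (k : ℝ)) ^ (-q)) +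
          (1 + (t : ℝ)) ^ (-q)) := by
  have hBdef : ∀ k : ℕ, (1 + (k:ℝ)) ^ (-q) = auxB q k := fun _ => rfl
  set c : ℝ := -p / 2 with hcdef
  have hc : 0 < c := by rw [hcdef]; linarith
  have habs : |p| = 2 * c := by rw [abs_of_neg hp]; ring
  have habs2 : |p| / 2 = c := by rw [habs]; ring
  have hip1 : 1 ≤ ip := by
    by_contra hcon
    have : ip = 0 := by omega
    subst this
    have : (0:ℝ) ≤ (|p| / (2*q)) ^ ((1:ℝ)/(1-q)) :=
      Real.rpow_nonneg (by positivity) _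
    simp only [Nat.cast_zero] at hip
    linarith
  -- the weight function H
  set H : ℕ → ℝ := fun i => Real.exp ((p/2) * ∑ k ∈ Finset.Icc i t, auxB q k) with hHdef
  have hHpos : ∀ i, 0 < H i := fun i => Real.exp_pos _
  set C : ℝ := Real.exp c / c with hCdef
  have hCpos : 0 < C := by positivity
  have hCeq : 2 * Real.exp (|p| / 2) / |p| = C := by
    rw [habs2, habs, hCdef]
    field_simp
  set AE : ℝ := Real.exp (c * auxS q ip) * Real.exp ((p/2) * auxS q t) with hAEdef
  have hAEpos : 0 < AE := by positivity
  -- Step A : telescoping bound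
  have stepA : ∀ i, i ≤ t → auxB q i * H (i+1) ≤ C * (H (i+1) - H i) := by
    intro i hit
    have hsplit : ∑ k ∈ Finset.Icc i t, auxB q k
        = auxB q i + ∑ k ∈ Finset.Icc (i+1) t, auxB q k := by
      rw [← Finset.Ico_add_one_right_eq_Icc, ← Finset.Ico_add_one_right_eq_Icc,
        Finset.sum_eq_sum_Ico_succ_bot (by omega : i < t + 1)]
    have hHi : H i = Real.exp (-(c * auxB q i)) * H (i+1) := by
      rw [hHdef]
      simp only []
      rw [hsplit, mul_add, Real.exp_add]
      congr 2
      rw [hcdef]; ring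
    set x : ℝ := c * auxB q i with hxdef
    have hx0 : 0 < x := mul_pos hc (auxB_pos q i)
    have hxc : x ≤ c := by
      calc x = c * auxB q i := rfl
        _ ≤ c * 1 := mul_le_mul_of_nonneg_left (auxB_le_one q hq0.le i) hc.le
        _ = c := mul_one c
    -- x * exp(-c) ≤ 1 - exp(-x)
    have hexp1 : x * Real.exp (-x) ≤ 1 - Real.exp (-x) := by
      have h1 := Real.add_one_le_exp x
      have h2 : (x + 1) * Real.exp (-x) ≤ Real.exp x * Real.exp (-x) :=
        mul_le_mul_of_nonneg_right h1 (Real.exp_pos _).le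
      rw [← Real.exp_add] at h2
      simp only [add_neg_cancel, Real.exp_zero] at h2
      nlinarith [Real.exp_pos (-x)]
    have hexp2 : Real.exp (-c) ≤ Real.exp (-x) := Real.exp_le_exp.2 (by linarith)
    have hkey : auxB q i ≤ C * (1 - Real.exp (-x)) := by
      have hxec : x * Real.exp (-c) ≤ 1 - Real.exp (-x) := by
        have := mul_le_mul_of_nonneg_left hexp2 hx0.le
        linarith
      have : x ≤ Real.exp c * (1 - Real.exp (-x)) := by
        have h3 := mul_le_mul_of_nonneg_left hxec (Real.exp_pos c).le
        calc x = Real.exp c * (x * Real.exp (-c)) := by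
              rw [← mul_assoc, mul_comm (Real.exp c) x, mul_assoc, ← Real.exp_add]
              simp
          _ ≤ Real.exp c * (1 - Real.exp (-x)) := h3
      rw [hCdef]
      rw [div_mul_eq_mul_div, le_div_iff₀ hc]
      calc auxB q i * c = x := by rw [hxdef]; ring
        _ ≤ Real.exp c * (1 - Real.exp (-x)) := this
    calc auxB q i * H (i+1) ≤ (C * (1 - Real.exp (-x))) * H (i+1) :=
          mul_le_mul_of_nonneg_right hkey (hHpos _).le
      _ = C * (H (i+1) - Real.exp (-x) * H (i+1)) := by ring
      _ = C * (H (i+1) - H i) := by rw [← hHi]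
  -- Step B : per-term bound via the key lemma
  have stepB : ∀ i, i ≤ t → auxB q i * H (i+1) ≤ AE + auxB q t := by
    intro i hit
    have hIcc : ∑ k ∈ Finset.Icc (i+1) t, auxB q k = auxS q t - auxS q i := by
      rw [← Finset.Ico_add_one_right_eq_Icc, Finset.sum_Ico_eq_sub _ (by omega : i + 1 ≤ t + 1)]
      rfl
    have hHe : H (i+1) = Real.exp ((p/2) * auxS q t) * Real.exp (c * auxS q i) := by
      rw [hHdef]
      simp only []
      rw [hIcc, ← Real.exp_add]
      congr 1
      rw [hcdef]; ring
    have hkey := auxKey q c hq0 hq1 hc ip hip1 hit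
    have hmul := mul_le_mul_of_nonneg_right hkey (Real.exp_pos ((p/2) * auxS q t)).le
    have hBt : auxH q c t * Real.exp ((p/2) * auxS q t) = auxB q t := by
      unfold auxH
      rw [mul_assoc, ← Real.exp_add]
      have : c * auxS q t + (p/2) * auxS q t = 0 := by rw [hcdef]; ring
      rw [this, Real.exp_zero, mul_one]
    calc auxB q i * H (i+1) = auxH q c i * Real.exp ((p/2) * auxS q t) := by
          rw [hHe]; unfold auxH; ring
      _ ≤ (Real.exp (c * auxS q ip) + auxH q c t) * Real.exp ((p/2) * auxS q t) := hmul
      _ = AE + auxH q c t * Real.exp ((p/2) * auxS q t) := by rw [hAEdef]; ring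
      _ = AE + auxB q t := by rw [hBt]
  -- rewrite each summand and sum up
  simp only [hBdef]
  have hper : ∀ i ∈ Finset.range (t+1),
      Real.exp (p * ∑ k ∈ Finset.Icc (i + 1) t, auxB q k) * (1 + (i : ℝ)) ^ (-(2 * q))
        ≤ (AE + auxB q t) * (C * (H (i+1) - H i)) := by
    intro i hi
    have hit : i ≤ t := by
      simp only [Finset.mem_range] at hi; omega
    have hpos := one_add_cast_pos i
    have h2q : (1 + (i:ℝ)) ^ (-(2*q)) = auxB q i * auxB q i := by
      unfold auxB
      rw [← Real.rpow_add hpos]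
      congr 1; ring
    have hexp : Real.exp (p * ∑ k ∈ Finset.Icc (i + 1) t, auxB q k)
        = H (i+1) * H (i+1) := by
      rw [hHdef]
      simp only []
      rw [← Real.exp_add]
      congr 1
      ring
    have hg0 : 0 ≤ auxB q i * H (i+1) := mul_nonneg (auxB_pos q i).le (hHpos _).le
    calc Real.exp (p * ∑ k ∈ Finset.Icc (i + 1) t, auxB q k) * (1 + (i:ℝ)) ^ (-(2*q))
        = (auxB q i * H (i+1)) * (auxB q i * H (i+1)) := by
          rw [hexp, h2q]; ring
      _ ≤ (AE + auxB q t) * (auxB q i * H (i+1)) :=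
          mul_le_mul_of_nonneg_right (stepB i hit) hg0
      _ ≤ (AE + auxB q t) * (C * (H (i+1) - H i)) := by
          apply mul_le_mul_of_nonneg_left (stepA i hit)
          have := (auxB_pos q t).le
          linarith [hAEpos]
  have htele : ∑ i ∈ Finset.range (t+1), (H (i+1) - H i) = H (t+1) - H 0 :=
    Finset.sum_range_sub H (t+1)
  have hHt1 : H (t+1) = 1 := by
    rw [hHdef]
    simp only []
    rw [Finset.Icc_eq_empty (by omega : ¬ t + 1 ≤ t), Finset.sum_empty, mul_zero,
      Real.exp_zero]
  calc ∑ i ∈ Finset.range (t + 1),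
        Real.exp (p * ∑ k ∈ Finset.Icc (i + 1) t, auxB q k) * (1 + (i : ℝ)) ^ (-(2 * q))
      ≤ ∑ i ∈ Finset.range (t+1), (AE + auxB q t) * (C * (H (i+1) - H i)) :=
        Finset.sum_le_sum hper
    _ = ((AE + auxB q t) * C) * ∑ i ∈ Finset.range (t+1), (H (i+1) - H i) := by
        rw [Finset.mul_sum]
        apply Finset.sum_congr rfl
        intro i _
        ring
    _ = ((AE + auxB q t) * C) * (H (t+1) - H 0) := by rw [htele]
    _ ≤ ((AE + auxB q t) * C) * 1 := by
        apply mul_le_mul_of_nonneg_left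
        · rw [hHt1]
          linarith [hHpos 0]
        · have := (auxB_pos q t).le
          positivity
    _ = (2 * Real.exp (|p| / 2) / |p|) *
        (Real.exp ((|p| / 2) * ∑ k ∈ Finset.range (ip + 1), auxB q k) *
            Real.exp ((p / 2) * ∑ k ∈ Finset.range (t + 1), auxB q k) +
          (1 + (t : ℝ)) ^ (-q)) := by
        rw [hCeq, habs2]
        have h1 : (∑ k ∈ Finset.range (ip + 1), auxB q k) = auxS q ip := rfl
        have h2 : (∑ k ∈ Finset.range (t + 1), auxB q k) = auxS q t := rfl
        rw [h1, h2, hBdef t, hAEdef]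
        ring
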